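/- Prove that for any two rows R, S on the alphabet {1,...,n}, there exist unique rows R', S' (with R' possibly empty) such that R·S ≡ R'·S' in the plactic monoid and R'·S' is a Young tableau, and that R', S' are given by the vector insertion algorithm applied to (R, S). -/

import Mathlib

open Finset

/-- Partial sum `Φ_p = φ_1 + ⋯ + φ_p` of a multiplicity vector. -/
def PS (f : ℕ → ℕ) (p : ℕ) : ℕ := ∑ i ∈ Finset.Icc 1 p, f i

/-- Partial sums `X_p` of the bumped row in the vector insertion `W·Z = X·Y`:
`X_0 = X_1 = 0`, `X_{p+1} = min(Z_p, X_p + w_{p+1})`. -/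
def capX (W Z : ℕ → ℕ) : ℕ → ℕ
  | 0 => 0
  | p + 1 => if p = 0 then 0 else min (PS Z p) (capX W Z p + W (p + 1))

/-- Component `x_p = X_p - X_{p-1} = min(Z_{p-1} - X_{p-1}, w_p)` (with `x_1 = 0`). -/
def xcomp (W Z : ℕ → ℕ) (p : ℕ) : ℕ := capX W Z p - capX W Z (p - 1)

/-- Component `y_q = w_q + z_q - x_q`. -/
def ycomp (W Z : ℕ → ℕ) (q : ℕ) : ℕ := W q + Z q - xcomp W Z q

/-- A row: a nondecreasing word. -/
def IsRow (r : List ℕ) : Prop := List.Pairwise (· ≤ ·) r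

/-- A row `R` dominates a row `S`. -/
def Dominates (R S : List ℕ) : Prop :=
  R.length ≤ S.length ∧ ∀ i < R.length, S.getD i 0 < R.getD i 0

/-- One application of a Knuth relation inside a word. -/
inductive KnuthStep : List ℕ → List ℕ → Prop
  | left (u v : List ℕ) (x y z : ℕ) (h1 : x ≤ y) (h2 : y < z) :
      KnuthStep (u ++ [x, z, y] ++ v) (u ++ [z, x, y] ++ v)
  | right (u v : List ℕ) (x y z : ℕ) (h1 : x < y) (h2 : y ≤ z) :
      KnuthStep (u ++ [y, x, z] ++ v) (u ++ [y, z, x] ++ v)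

/-- The plactic congruence. -/
def PlacticEq : List ℕ → List ℕ → Prop := Relation.EqvGen KnuthStep


theorem knuth_perm {w w' : List ℕ} (h : KnuthStep w w') : w.Perm w' := by
  cases h with
  | left u v x y z h1 h2 =>
    have := (((List.Perm.swap' z x (List.Perm.refl [y])).append_right v).append_left u)
    simpa only [List.append_assoc] using this
  | right u v x y z h1 h2 =>
    have := (((List.Perm.cons y (List.Perm.swap' z x (List.Perm.refl []))).append_right v).append_left u)
    simpa only [List.append_assoc] using this

theorem placticEq_perm {w w' : List ℕ} (h : PlacticEq w w') : w.Perm w' := by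
  induction h with
  | rel _ _ h => exact knuth_perm h
  | refl => exact List.Perm.refl _
  | symm _ _ _ ih => exact ih.symm
  | trans _ _ _ _ _ ih1 ih2 => exact ih1.trans ih2

theorem knuth_context {w w' : List ℕ} (a b : List ℕ) (h : KnuthStep w w') :
    KnuthStep (a ++ w ++ b) (a ++ w' ++ b) := by
  cases h with
  | left u v x y z h1 h2 =>
    have := KnuthStep.left (a ++ u) (v ++ b) x y z h1 h2
    simpa only [List.append_assoc] using this
  | right u v x y z h1 h2 =>
    have := KnuthStep.right (a ++ u) (v ++ b) x y z h1 h2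
    simpa only [List.append_assoc] using this

theorem PlacticEq.context {w w' : List ℕ} (a b : List ℕ) (h : PlacticEq w w') :
    PlacticEq (a ++ w ++ b) (a ++ w' ++ b) := by
  induction h with
  | rel _ _ h => exact Relation.EqvGen.rel _ _ (knuth_context a b h)
  | refl => exact Relation.EqvGen.refl _
  | symm _ _ _ ih => exact Relation.EqvGen.symm _ _ ih
  | trans _ _ _ _ _ ih1 ih2 => exact Relation.EqvGen.trans _ _ _ ih1 ih2

theorem PlacticEq.appendL {w w' : List ℕ} (a : List ℕ) (h : PlacticEq w w') :
    PlacticEq (a ++ w) (a ++ w') := by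
  simpa using h.context a []

theorem PlacticEq.appendR {w w' : List ℕ} (b : List ℕ) (h : PlacticEq w w') :
    PlacticEq (w ++ b) (w' ++ b) := by
  simpa using h.context [] b

theorem sublist_triple {l : List ℕ} {a b c : ℕ} (h : l.Sublist [a, b, c]) :
    l = [] ∨ l = [a] ∨ l = [b] ∨ l = [c] ∨
    l = [a, b] ∨ l = [a, c] ∨ l = [b, c] ∨ l = [a, b, c] := by
  have h2 := List.mem_sublists.2 h
  simp [List.sublists, List.sublistsAux] at h2
  tauto

def lis (w : List ℕ) : ℕ :=
  ((w.sublists.filter fun l => decide (List.IsChain (· ≤ ·) l)).map List.length).foldr max 0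

theorem le_lis {w l : List ℕ} (hs : l.Sublist w) (hc : List.IsChain (· ≤ ·) l) :
    l.length ≤ lis w := by
  have h1 : l ∈ w.sublists.filter fun l => decide (List.IsChain (· ≤ ·) l) := by
    simp [List.mem_filter, List.mem_sublists, hs, hc]
  have h2 : l.length ∈ (w.sublists.filter fun l => decide (List.IsChain (· ≤ ·) l)).map List.length :=
    List.mem_map_of_mem h1
  have h3 : lis w = ((w.sublists.filter fun l => decide (List.IsChain (· ≤ ·) l)).map List.length).foldr max ⊥ := rfl
  rw [h3]
  exact List.le_max_of_le h2 le_rfl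

theorem lis_le {w : List ℕ} {L : ℕ}
    (h : ∀ l : List ℕ, l.Sublist w → List.IsChain (· ≤ ·) l → l.length ≤ L) :
    lis w ≤ L := by
  have h3 : lis w = ((w.sublists.filter fun l => decide (List.IsChain (· ≤ ·) l)).map List.length).foldr max ⊥ := rfl
  rw [h3]
  apply List.max_le_of_forall_le
  intro x hx
  obtain ⟨l, hl, rfl⟩ := List.mem_map.1 hx
  obtain ⟨hs, hc⟩ := List.mem_filter.1 hl
  exact h l (List.mem_sublists.1 hs) (by simpa using hc)

theorem exists_lis (w : List ℕ) :
    ∃ l : List ℕ, l.Sublist w ∧ List.IsChain (· ≤ ·) l ∧ l.length = lis w := by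
  by_cases hw : lis w = 0
  · exact ⟨[], List.nil_sublist w, List.isChain_nil, by simp [hw]⟩
  · by_contra hcon
    push_neg at hcon
    have : lis w ≤ lis w - 1 := by
      apply lis_le
      intro l hs hc
      have h1 := hcon l hs hc
      have h2 := le_lis hs hc
      omega
    omega

theorem chain_mid2 {l1 l3 : List ℕ} {p q : ℕ} :
    List.IsChain (· ≤ ·) (l1 ++ ([p, q] ++ l3)) ↔
      List.IsChain (· ≤ ·) l1 ∧ (∀ a ∈ l1.getLast?, a ≤ p) ∧ p ≤ q ∧
      (∀ b ∈ l3.head?, q ≤ b) ∧ List.IsChain (· ≤ ·) l3 := by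
  rw [List.isChain_append]
  simp only [List.cons_append, List.nil_append, List.isChain_cons_cons, List.isChain_cons,
    List.head?_cons, Option.mem_def, Option.some.injEq, forall_eq']
  tauto

theorem chain_mid3 {l1 l3 : List ℕ} {p q r : ℕ} :
    List.IsChain (· ≤ ·) (l1 ++ ([p, q, r] ++ l3)) ↔
      List.IsChain (· ≤ ·) l1 ∧ (∀ a ∈ l1.getLast?, a ≤ p) ∧ p ≤ q ∧ q ≤ r ∧
      (∀ b ∈ l3.head?, r ≤ b) ∧ List.IsChain (· ≤ ·) l3 := by
  rw [List.isChain_append]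
  simp only [List.cons_append, List.nil_append, List.isChain_cons_cons, List.isChain_cons,
    List.head?_cons, Option.mem_def, Option.some.injEq, forall_eq']
  tauto

theorem lis_aux {u v l1 l2 l3 m : List ℕ} (h1 : l1.Sublist u) (h2 : l2.Sublist m)
    (h3 : l3.Sublist v) (hc : List.IsChain (· ≤ ·) (l1 ++ (l2 ++ l3))) :
    (l1 ++ (l2 ++ l3)).length ≤ lis (u ++ m ++ v) := by
  rw [List.append_assoc]
  exact le_lis (h1.append (h2.append h3)) hc

theorem lis_aux2 {u v l1 l2 l2' l3 m : List ℕ} (h1 : l1.Sublist u) (h2 : l2'.Sublist m)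
    (h3 : l3.Sublist v) (hc : List.IsChain (· ≤ ·) (l1 ++ (l2' ++ l3)))
    (hlen : l2.length = l2'.length) :
    (l1 ++ (l2 ++ l3)).length ≤ lis (u ++ m ++ v) := by
  have h4 := lis_aux h1 h2 h3 hc
  simpa [List.length_append, hlen] using h4

theorem lis_left_le (u v : List ℕ) (x y z : ℕ) (h1 : x ≤ y) (h2 : y < z) :
    lis (u ++ [x, z, y] ++ v) ≤ lis (u ++ [z, x, y] ++ v) := by
  apply lis_le
  intro l hs hc
  rw [List.append_assoc, List.sublist_append_iff] at hs
  obtain ⟨l1, l23, rfl, hu, h23⟩ := hs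
  rw [List.sublist_append_iff] at h23
  obtain ⟨l2, l3, rfl, hm, hv⟩ := h23
  rcases sublist_triple hm with rfl | rfl | rfl | rfl | rfl | rfl | rfl | rfl
  · exact lis_aux hu (List.nil_sublist _) hv hc
  · exact lis_aux hu (by simp) hv hc
  · exact lis_aux hu (by simp) hv hc
  · exact lis_aux hu (by simp) hv hc
  · -- [x, z] → [x, y]
    rw [chain_mid2] at hc
    obtain ⟨c1, c2, _, c4, c5⟩ := hc
    refine lis_aux2 (l2' := [x, y]) hu (List.Sublist.cons z (List.Sublist.refl _)) hv ?_ rfl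
    exact chain_mid2.2 ⟨c1, c2, h1, fun b hb => le_trans h2.le (c4 b hb), c5⟩
  · exact lis_aux hu (List.Sublist.cons z (List.Sublist.refl _)) hv hc
  · rw [chain_mid2] at hc; omega
  · rw [chain_mid3] at hc; omega

theorem lis_left_ge (u v : List ℕ) (x y z : ℕ) (h1 : x ≤ y) (h2 : y < z) :
    lis (u ++ [z, x, y] ++ v) ≤ lis (u ++ [x, z, y] ++ v) := by
  apply lis_le
  intro l hs hc
  rw [List.append_assoc, List.sublist_append_iff] at hs
  obtain ⟨l1, l23, rfl, hu, h23⟩ := hs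
  rw [List.sublist_append_iff] at h23
  obtain ⟨l2, l3, rfl, hm, hv⟩ := h23
  rcases sublist_triple hm with rfl | rfl | rfl | rfl | rfl | rfl | rfl | rfl
  · exact lis_aux hu (List.nil_sublist _) hv hc
  · exact lis_aux hu (by simp) hv hc
  · exact lis_aux hu (by simp) hv hc
  · exact lis_aux hu (by simp) hv hc
  · rw [chain_mid2] at hc; omega
  · rw [chain_mid2] at hc; omega
  · exact lis_aux hu (List.Sublist.cons₂ x (List.Sublist.cons z (List.Sublist.refl _))) hv hc
  · rw [chain_mid3] at hc; omega

theorem lis_right_le (u v : List ℕ) (x y z : ℕ) (h1 : x < y) (h2 : y ≤ z) :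
    lis (u ++ [y, x, z] ++ v) ≤ lis (u ++ [y, z, x] ++ v) := by
  apply lis_le
  intro l hs hc
  rw [List.append_assoc, List.sublist_append_iff] at hs
  obtain ⟨l1, l23, rfl, hu, h23⟩ := hs
  rw [List.sublist_append_iff] at h23
  obtain ⟨l2, l3, rfl, hm, hv⟩ := h23
  rcases sublist_triple hm with rfl | rfl | rfl | rfl | rfl | rfl | rfl | rfl
  · exact lis_aux hu (List.nil_sublist _) hv hc
  · exact lis_aux hu (by simp) hv hc
  · exact lis_aux hu (by simp) hv hc
  · exact lis_aux hu (by simp) hv hc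
  · rw [chain_mid2] at hc; omega
  · -- [y, z] unchanged
    exact lis_aux hu (List.Sublist.cons₂ y (List.Sublist.cons₂ z (List.nil_sublist _))) hv hc
  · -- [x, z] → [y, z]
    rw [chain_mid2] at hc
    obtain ⟨c1, c2, _, c4, c5⟩ := hc
    refine lis_aux2 (l2' := [y, z]) hu
      (List.Sublist.cons₂ y (List.Sublist.cons₂ z (List.nil_sublist _))) hv ?_ rfl
    exact chain_mid2.2 ⟨c1, fun a ha => le_trans (c2 a ha) h1.le, h2, c4, c5⟩
  · rw [chain_mid3] at hc; omega

theorem lis_right_ge (u v : List ℕ) (x y z : ℕ) (h1 : x < y) (h2 : y ≤ z) :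
    lis (u ++ [y, z, x] ++ v) ≤ lis (u ++ [y, x, z] ++ v) := by
  apply lis_le
  intro l hs hc
  rw [List.append_assoc, List.sublist_append_iff] at hs
  obtain ⟨l1, l23, rfl, hu, h23⟩ := hs
  rw [List.sublist_append_iff] at h23
  obtain ⟨l2, l3, rfl, hm, hv⟩ := h23
  rcases sublist_triple hm with rfl | rfl | rfl | rfl | rfl | rfl | rfl | rfl
  · exact lis_aux hu (List.nil_sublist _) hv hc
  · exact lis_aux hu (by simp) hv hc
  · exact lis_aux hu (by simp) hv hc
  · exact lis_aux hu (by simp) hv hc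
  · -- [y, z] unchanged
    exact lis_aux hu (List.Sublist.cons₂ y (List.Sublist.cons x (List.Sublist.refl _))) hv hc
  · rw [chain_mid2] at hc; omega
  · rw [chain_mid2] at hc; omega
  · rw [chain_mid3] at hc; omega

theorem knuth_filter {w w' : List ℕ} (k : ℕ) (h : KnuthStep w w') :
    w.filter (fun a => decide (a ≤ k)) = w'.filter (fun a => decide (a ≤ k)) ∨
    KnuthStep (w.filter (fun a => decide (a ≤ k))) (w'.filter (fun a => decide (a ≤ k))) := by
  cases h with
  | left u v x y z h1 h2 =>
    by_cases hz : z ≤ k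
    · have hy : y ≤ k := by omega
      have hx : x ≤ k := by omega
      right
      have e1 : (u ++ [x, z, y] ++ v).filter (fun a => decide (a ≤ k)) =
          u.filter (fun a => decide (a ≤ k)) ++ [x, z, y] ++ v.filter (fun a => decide (a ≤ k)) := by
        simp [List.filter_append, hx, hy, hz]
      have e2 : (u ++ [z, x, y] ++ v).filter (fun a => decide (a ≤ k)) =
          u.filter (fun a => decide (a ≤ k)) ++ [z, x, y] ++ v.filter (fun a => decide (a ≤ k)) := by
        simp [List.filter_append, hx, hy, hz]
      rw [e1, e2]
      exact KnuthStep.left _ _ x y z h1 h2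
    · left
      by_cases hy : y ≤ k
      · have hx : x ≤ k := by omega
        simp [List.filter_append, hx, hy, hz]
      · by_cases hx : x ≤ k <;> simp [List.filter_append, hx, hy, hz, show ¬ z ≤ k from hz]
  | right u v x y z h1 h2 =>
    by_cases hz : z ≤ k
    · have hy : y ≤ k := by omega
      have hx : x ≤ k := by omega
      right
      have e1 : (u ++ [y, x, z] ++ v).filter (fun a => decide (a ≤ k)) =
          u.filter (fun a => decide (a ≤ k)) ++ [y, x, z] ++ v.filter (fun a => decide (a ≤ k)) := by
        simp [List.filter_append, hx, hy, hz]
      have e2 : (u ++ [y, z, x] ++ v).filter (fun a => decide (a ≤ k)) =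
          u.filter (fun a => decide (a ≤ k)) ++ [y, z, x] ++ v.filter (fun a => decide (a ≤ k)) := by
        simp [List.filter_append, hx, hy, hz]
      rw [e1, e2]
      exact KnuthStep.right _ _ x y z h1 h2
    · left
      by_cases hy : y ≤ k
      · have hx : x ≤ k := by omega
        simp [List.filter_append, hx, hy, hz]
      · have hx' : ¬ (y ≤ k) := hy
        by_cases hx : x ≤ k <;> simp [List.filter_append, hx, hy, hz]

theorem PS_zero (f : ℕ → ℕ) : PS f 0 = 0 := by simp [PS]

theorem PS_succ (f : ℕ → ℕ) (k : ℕ) : PS f (k + 1) = PS f k + f (k + 1) := by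
  rw [PS, PS, Finset.sum_Icc_succ_top (by omega)]

theorem PS_mono (f : ℕ → ℕ) {a b : ℕ} (h : a ≤ b) : PS f a ≤ PS f b := by
  apply Finset.sum_le_sum_of_subset
  intro x hx
  simp only [Finset.mem_Icc] at *
  omega

theorem countP_split (l : List ℕ) (t k : ℕ) :
    l.countP (fun b => decide (b < t ∧ b ≤ k)) + l.countP (fun b => decide (t ≤ b ∧ b ≤ k)) =
    l.countP (fun b => decide (b ≤ k)) := by
  induction l with
  | nil => simp
  | cons a l ih =>
    simp only [List.countP_cons, Bool.decide_and] at ih ⊢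
    by_cases h1 : a < t <;> by_cases h2 : t ≤ a <;> by_cases h3 : a ≤ k <;>
      simp [h1, h2, h3] <;> omega

theorem countP_succ (l : List ℕ) (k : ℕ) :
    l.countP (fun a => decide (a ≤ k + 1)) = l.countP (fun a => decide (a ≤ k)) + l.count (k + 1) := by
  induction l with
  | nil => simp
  | cons a l ih =>
    simp only [List.countP_cons, List.count_cons, ih]
    by_cases h1 : a ≤ k + 1 <;> by_cases h2 : a ≤ k <;> by_cases h3 : a = k + 1 <;>
      simp [h1, h2, h3] <;> omega

theorem PS_count (l : List ℕ) (h : ∀ a ∈ l, 1 ≤ a) (k : ℕ) :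
    PS (fun j => l.count j) k = l.countP (fun a => decide (a ≤ k)) := by
  induction k with
  | zero =>
    rw [PS_zero]
    symm
    rw [List.countP_eq_zero]
    intro a ha
    have := h a ha
    simp
    omega
  | succ k ih => rw [PS_succ, countP_succ, ih]

theorem filter_length_le : ∀ (A B : List ℕ) (P Q : ℕ → Bool), A.length ≤ B.length →
    (∀ i, i < A.length → P (A.getD i 0) = true → Q (B.getD i 0) = true) →
    (A.filter P).length ≤ (B.filter Q).length
  | [], _, _, _, _, _ => by simp
  | a :: A', [], P, Q, h, _ => by simp at h
  | a :: A', b :: B', P, Q, hlen, h => by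
    have ih := filter_length_le A' B' P Q (by simpa using hlen)
      (fun i hi => by
        have := h (i + 1) (by simpa using hi)
        simpa using this)
    by_cases hp : P a = true
    · have hq : Q b = true := by simpa using h 0 (by simp) (by simpa using hp)
      have e1 : List.filter P (a :: A') = a :: List.filter P A' := by
        simp [List.filter_cons, hp]
      have e2 : List.filter Q (b :: B') = b :: List.filter Q B' := by
        simp [List.filter_cons, hq]
      rw [e1, e2]
      simpa using ih
    · simp only [List.filter_cons, hp]
      simp only [Bool.false_eq_true, if_false]
      refine le_trans ih ?_
      by_cases hq : Q b = true <;> simp [hq]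




variable (W Z : ℕ → ℕ)

theorem capX_zero : capX W Z 0 = 0 := rfl
theorem capX_one : capX W Z 1 = 0 := rfl
theorem capX_succ {p : ℕ} (hp : 1 ≤ p) :
    capX W Z (p + 1) = min (PS Z p) (capX W Z p + W (p + 1)) := by
  have : p ≠ 0 := by omega
  simp [capX, this]

theorem capX_le_Z : ∀ p : ℕ, capX W Z p ≤ PS Z (p - 1)
  | 0 => by simp [capX_zero]
  | 1 => by simp [capX_one]
  | p + 2 => by
    rw [capX_succ W Z (by omega)]
    simp

theorem capX_le_W : ∀ p : ℕ, capX W Z p ≤ PS W p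
  | 0 => by simp [capX_zero]
  | 1 => by simp [capX_one]
  | p + 2 => by
    rw [capX_succ W Z (by omega), show W (p + 1 + 1) = W (p + 2) from rfl]
    have := capX_le_W (p + 1)
    have h2 : PS W (p + 2) = PS W (p + 1) + W (p + 2) := PS_succ W (p + 1)
    omega

theorem capX_succ_le : ∀ p : ℕ, capX W Z (p + 1) ≤ capX W Z p + W (p + 1)
  | 0 => by simp [capX_zero, capX_one]
  | p + 1 => by rw [capX_succ W Z (by omega)]; omega

theorem capX_mono_succ (p : ℕ) : capX W Z p ≤ capX W Z (p + 1) := by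
  match p with
  | 0 => simp [capX_zero]
  | p + 1 =>
    have e : capX W Z (p + 2) = min (PS Z (p + 1)) (capX W Z (p + 1) + W (p + 2)) :=
      capX_succ W Z (p := p + 1) (by omega)
    have h1 := capX_le_Z W Z (p + 1)
    have h2 : PS Z p ≤ PS Z (p + 1) := PS_mono Z (by omega)
    simp only [Nat.add_sub_cancel] at h1
    have : capX W Z (p + 1 + 1) = capX W Z (p + 2) := rfl
    rw [this, e]
    omega

theorem capX_mono {a b : ℕ} (h : a ≤ b) : capX W Z a ≤ capX W Z b := by
  induction b with
  | zero => simp [Nat.le_zero.1 h, capX_zero]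
  | succ b ih =>
    rcases Nat.lt_or_ge a (b + 1) with h' | h'
    · exact le_trans (ih (by omega)) (capX_mono_succ W Z b)
    · have : a = b + 1 := by omega
      simp [this]

theorem PS_xcomp (k : ℕ) : PS (xcomp W Z) k = capX W Z k := by
  induction k with
  | zero => simp [PS_zero, capX_zero]
  | succ k ih =>
    rw [PS_succ, ih]
    have h1 := capX_mono_succ W Z k
    simp only [xcomp]
    have : k + 1 - 1 = k := by omega
    rw [this]
    omega

theorem xcomp_le (p : ℕ) : xcomp W Z p ≤ W p + Z p := by
  match p with
  | 0 => simp [xcomp, capX_zero]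
  | p + 1 =>
    simp only [xcomp, Nat.add_sub_cancel]
    have := capX_succ_le W Z p
    omega

-- key inequality A
theorem keyA {t k : ℕ} (ht : 1 ≤ t) (htk : t ≤ k) :
    capX W Z k + PS W t ≤ PS W k + PS Z (t - 1) := by
  induction k with
  | zero => omega
  | succ k ih =>
    rcases Nat.lt_or_ge k t with h' | h'
    · have : t = k + 1 := by omega
      subst this
      have := capX_le_Z W Z (k + 1)
      omega
    · have h1 := ih (by omega)
      have h2 := capX_succ_le W Z k
      have h3 := PS_succ W k
      omega

-- key equality B
theorem keyB : ∀ k : ℕ, 1 ≤ k →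
    ∃ t, 1 ≤ t ∧ t ≤ k ∧ capX W Z k + PS W t = PS W k + PS Z (t - 1)
  | 0, h => by omega
  | 1, _ => ⟨1, le_rfl, le_rfl, by simp [capX_one, PS_zero]⟩
  | k + 2, _ => by
    obtain ⟨t, ht1, ht2, ht3⟩ := keyB (k + 1) (by omega)
    rw [capX_succ W Z (by omega), show W (k + 1 + 1) = W (k + 2) from rfl]
    rcases Nat.le_total (PS Z (k + 1)) (capX W Z (k + 1) + W (k + 2)) with h | h
    · refine ⟨k + 2, by omega, le_rfl, ?_⟩
      rw [min_eq_left h, show PS Z (k + 2 - 1) = PS Z (k + 1) from rfl]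
      omega
    · refine ⟨t, ht1, by omega, ?_⟩
      rw [min_eq_right h]
      have h3 : PS W (k + 2) = PS W (k + 1) + W (k + 2) := PS_succ W (k + 1)
      omega

theorem knuth_lis {w w' : List ℕ} (h : KnuthStep w w') : lis w = lis w' := by
  cases h with
  | left u v x y z h1 h2 =>
    exact le_antisymm (lis_left_le u v x y z h1 h2) (lis_left_ge u v x y z h1 h2)
  | right u v x y z h1 h2 =>
    exact le_antisymm (lis_right_le u v x y z h1 h2) (lis_right_ge u v x y z h1 h2)

theorem placticEq_lis_filter {w w' : List ℕ} (k : ℕ) (h : PlacticEq w w') :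
    lis (w.filter fun a => decide (a ≤ k)) = lis (w'.filter fun a => decide (a ≤ k)) := by
  induction h with
  | rel a b hab =>
    rcases knuth_filter k hab with he | hs
    · rw [he]
    · exact knuth_lis hs
  | refl => rfl
  | symm _ _ _ ih => exact ih.symm
  | trans _ _ _ _ _ ih1 ih2 => exact ih1.trans ih2

theorem placticEq_countP {w w' : List ℕ} (p : ℕ → Bool) (h : PlacticEq w w') :
    w.countP p = w'.countP p := (placticEq_perm h).countP_eq p

theorem sorted_filter {l : List ℕ} (p : ℕ → Bool) (h : List.Pairwise (· ≤ ·) l) :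
    List.Pairwise (· ≤ ·) (l.filter p) :=
  List.Pairwise.sublist List.filter_sublist h

theorem sorted_chain' {l : List ℕ} (h : List.Pairwise (· ≤ ·) l) : List.IsChain (· ≤ ·) l :=
  List.isChain_iff_pairwise.2 h

theorem mem_le_of_getLast? {l : List ℕ} {x : ℕ} (h : l.getLast? = some x) : x ∈ l := by
  obtain ⟨h1, rfl⟩ := List.mem_getLast?_eq_getLast (x := x) (l := l) h
  exact List.getLast_mem h1

theorem mem_of_head? {l : List ℕ} {x : ℕ} (h : l.head? = some x) : x ∈ l :=
  List.mem_of_mem_head? (by simp [h])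

theorem lis_nil : lis [] = 0 := rfl

/-- chain decomposition for `l1 ++ t :: l2`. -/
theorem chain_decomp {l1 l2 : List ℕ} {t : ℕ}
    (hc : List.IsChain (· ≤ ·) (l1 ++ t :: l2)) :
    (∀ a ∈ l1, a ≤ t) ∧ (∀ b ∈ l2, t ≤ b) := by
  have hp := List.isChain_iff_pairwise.1 hc
  rw [List.pairwise_append] at hp
  obtain ⟨hp1, hp2, hp3⟩ := hp
  constructor
  · intro a ha
    exact hp3 a ha t (by simp)
  · intro b hb
    rw [List.pairwise_cons] at hp2
    exact hp2.1 b hb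

theorem sublist_filter_of_forall {l L : List ℕ} {p : ℕ → Bool} (hs : l.Sublist L)
    (h : ∀ a ∈ l, p a = true) : l.Sublist (L.filter p) := by
  have : l.filter p = l := List.filter_eq_self.2 h
  rw [← this]
  exact hs.filter p

theorem lis_two_rows (k : ℕ) {R S : List ℕ} (hR : List.Pairwise (· ≤ ·) R)
    (hS : List.Pairwise (· ≤ ·) S) (hR1 : ∀ a ∈ R, 1 ≤ a) (hS1 : ∀ a ∈ S, 1 ≤ a) :
    lis ((R ++ S).filter fun a => decide (a ≤ k)) =
      PS (fun j => R.count j) k + PS (fun j => S.count j) k -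
        capX (fun j => R.count j) (fun j => S.count j) k := by
  set W : ℕ → ℕ := fun j => R.count j with hW
  set Z : ℕ → ℕ := fun j => S.count j with hZ
  clear_value W Z
  have PSW : ∀ m, PS W m = R.countP (fun a => decide (a ≤ m)) := fun m => by
    rw [hW]; exact PS_count R hR1 m
  have PSZ : ∀ m, PS Z m = S.countP (fun a => decide (a ≤ m)) := fun m => by
    rw [hZ]; exact PS_count S hS1 m
  rcases Nat.eq_zero_or_pos k with rfl | hk
  · have h1 : (R ++ S).filter (fun a => decide (a ≤ 0)) = [] := by
      rw [List.filter_eq_nil_iff]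
      intro a ha
      rcases List.mem_append.1 ha with h | h
      · have := hR1 a h; simp; omega
      · have := hS1 a h; simp; omega
    rw [h1, lis_nil, PS_zero, PS_zero]
    rfl
  -- abbreviations
  have hXZ := capX_le_Z W Z k
  have hXW := capX_le_W W Z k
  have hZk : PS Z (k - 1) ≤ PS Z k := PS_mono Z (by omega)
  have hAlen : (R.filter fun a => decide (a ≤ k)).length = PS W k := by
    rw [← List.countP_eq_length_filter, PSW k]
  have hBlen : (S.filter fun a => decide (a ≤ k)).length = PS Z k := by
    rw [← List.countP_eq_length_filter, PSZ k]
  apply le_antisymm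
  · apply lis_le
    intro l hs hc
    rw [List.filter_append, List.sublist_append_iff] at hs
    obtain ⟨l1, l2, rfl, h1, h2⟩ := hs
    cases l2 with
    | nil =>
      have := h1.length_le
      rw [hAlen] at this
      simp only [List.append_nil, List.length_append]
      omega
    | cons t l2' =>
      have htB : t ∈ S.filter fun a => decide (a ≤ k) := h2.subset (by simp)
      have htk : t ≤ k := by simpa using List.of_mem_filter htB
      have ht1 : 1 ≤ t := hS1 t (List.mem_of_mem_filter htB)
      obtain ⟨hle, hge⟩ := chain_decomp hc
      -- bound l1
      have hl1 : l1.Sublist ((R.filter fun a => decide (a ≤ k)).filter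
          fun a => decide (a ≤ t)) :=
        sublist_filter_of_forall h1 (fun a ha => by simpa using hle a ha)
      have hl1len : l1.length ≤ PS W t := by
        have := hl1.length_le
        rw [List.filter_filter, ← List.countP_eq_length_filter] at this
        have e : R.countP (fun a => decide (a ≤ t) && decide (a ≤ k)) =
            R.countP (fun a => decide (a ≤ t)) := by
          apply List.countP_congr
          intro a _
          by_cases h : a ≤ t <;> simp [h] <;> omega
        rw [e] at this
        rw [← PSW t] at this
        exact this
      -- bound t :: l2'
      have hl2 : (t :: l2').Sublist ((S.filter fun a => decide (a ≤ k)).filter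
          fun b => decide (t ≤ b)) := by
        apply sublist_filter_of_forall h2
        intro b hb
        rcases List.mem_cons.1 hb with rfl | hb'
        · simp
        · simpa using hge b hb'
      have hl2len : (t :: l2').length ≤ PS Z k - PS Z (t - 1) := by
        have hlen := hl2.length_le
        rw [List.filter_filter, ← List.countP_eq_length_filter] at hlen
        have e1 : S.countP (fun b => decide (t ≤ b) && decide (b ≤ k)) =
            S.countP (fun b => decide (t ≤ b ∧ b ≤ k)) := by
          apply List.countP_congr
          intro b _
          by_cases hb1 : t ≤ b <;> by_cases hb2 : b ≤ k <;> simp [hb1, hb2]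
        have e2 : S.countP (fun b => decide (b < t ∧ b ≤ k)) =
            S.countP (fun b => decide (b ≤ t - 1)) := by
          apply List.countP_congr
          intro b _
          by_cases hb1 : b < t <;> by_cases hb2 : b ≤ t - 1 <;> simp [hb1, hb2] <;> omega
        have e3 := countP_split S t k
        rw [e1] at hlen
        rw [e2] at e3
        rw [← PSZ (t - 1), ← PSZ k] at e3
        omega
      have hA := keyA W Z ht1 htk
      simp only [List.length_append, List.length_cons]
      simp only [List.length_cons] at hl2len
      omega
  · obtain ⟨t, ht1, htk, htEq⟩ := keyB W Z k hk
    set l1 := R.filter fun a => decide (a ≤ t) with hl1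
    set l2 := S.filter (fun b => decide (t ≤ b) && decide (b ≤ k)) with hl2
    have hsub : (l1 ++ l2).Sublist ((R ++ S).filter fun a => decide (a ≤ k)) := by
      rw [List.filter_append]
      apply List.Sublist.append
      · apply List.monotone_filter_right
        intro a ha
        simp at ha ⊢
        omega
      · apply List.monotone_filter_right
        intro a ha
        simp at ha ⊢
        omega
    have hchain : List.IsChain (· ≤ ·) (l1 ++ l2) := by
      rw [List.isChain_append]
      refine ⟨sorted_chain' (sorted_filter _ hR), sorted_chain' (sorted_filter _ hS), ?_⟩
      intro x hx y hy
      have hx1 : x ∈ l1 := mem_le_of_getLast? hx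
      have hy1 : y ∈ l2 := mem_of_head? hy
      have hx2 : x ≤ t := by simpa using List.of_mem_filter hx1
      have hy2 : t ≤ y := by
        have := List.of_mem_filter hy1
        simp at this
        omega
      omega
    have hlen : (l1 ++ l2).length = PS W k + PS Z k - capX W Z k := by
      rw [List.length_append]
      have e1 : l1.length = PS W t := by
        rw [hl1, ← List.countP_eq_length_filter, PSW t]
      have e2 : l2.length = PS Z k - PS Z (t - 1) := by
        rw [hl2, ← List.countP_eq_length_filter]
        have e1' : S.countP (fun b => decide (t ≤ b) && decide (b ≤ k)) =
            S.countP (fun b => decide (t ≤ b ∧ b ≤ k)) := by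
          apply List.countP_congr
          intro b _
          by_cases hb1 : t ≤ b <;> by_cases hb2 : b ≤ k <;> simp [hb1, hb2]
        have e2' : S.countP (fun b => decide (b < t ∧ b ≤ k)) =
            S.countP (fun b => decide (b ≤ t - 1)) := by
          apply List.countP_congr
          intro b _
          by_cases hb1 : b < t <;> by_cases hb2 : b ≤ t - 1 <;> simp [hb1, hb2] <;> omega
        have e3 := countP_split S t k
        rw [e2'] at e3
        rw [← PSZ (t - 1), ← PSZ k] at e3
        rw [e1']
        omega
      have hZt : PS Z (t - 1) ≤ PS Z k := PS_mono Z (by omega)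
      omega
    have := le_lis hsub hchain
    omega

theorem lis_tableau (k : ℕ) {A B : List ℕ} (hA : List.Pairwise (· ≤ ·) A)
    (hB : List.Pairwise (· ≤ ·) B) (hdom : A = [] ∨ Dominates A B) :
    lis ((A ++ B).filter fun a => decide (a ≤ k)) =
      B.countP fun b => decide (b ≤ k) := by
  apply le_antisymm
  · apply lis_le
    intro l hs hc
    rw [List.filter_append, List.sublist_append_iff] at hs
    obtain ⟨l1, l2, rfl, h1, h2⟩ := hs
    rcases hdom with rfl | ⟨hlen, hdom⟩
    · simp only [List.filter_nil, List.sublist_nil] at h1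
      subst h1
      rw [List.countP_eq_length_filter]
      simpa using h2.length_le
    cases l2 with
    | nil =>
      have hle := h1.length_le
      have h3 : (A.filter fun a => decide (a ≤ k)).length ≤
          (B.filter fun b => decide (b ≤ k)).length := by
        apply filter_length_le A B _ _ hlen
        intro i hi hp
        have := hdom i hi
        simp only [decide_eq_true_eq] at hp ⊢
        omega
      rw [List.countP_eq_length_filter]
      simp only [List.append_nil]
      omega
    | cons t l2' =>
      obtain ⟨hle, hge⟩ := chain_decomp hc
      have hl1 : l1.Sublist ((A.filter fun a => decide (a ≤ k)).filter
          fun a => decide (a ≤ t)) :=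
        sublist_filter_of_forall h1 (fun a ha => by simpa using hle a ha)
      have hl1len : l1.length ≤ B.countP fun b => decide (b < t) && decide (b ≤ k) := by
        have hlen2 := hl1.length_le
        rw [List.filter_filter] at hlen2
        refine le_trans hlen2 ?_
        rw [List.countP_eq_length_filter]
        apply filter_length_le A B _ _ hlen
        intro i hi hp
        have := hdom i hi
        simp only [Bool.and_eq_true, decide_eq_true_eq] at hp ⊢
        omega
      have hl2 : (t :: l2').Sublist ((B.filter fun a => decide (a ≤ k)).filter
          fun b => decide (t ≤ b)) := by
        apply sublist_filter_of_forall h2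
        intro b hb
        rcases List.mem_cons.1 hb with rfl | hb'
        · simp
        · simpa using hge b hb'
      have hl2len : (t :: l2').length ≤ B.countP fun b => decide (t ≤ b) && decide (b ≤ k) := by
        have := hl2.length_le
        rw [List.filter_filter, ← List.countP_eq_length_filter] at this
        exact this
      have e1 : B.countP (fun b => decide (b < t) && decide (b ≤ k)) =
          B.countP (fun b => decide (b < t ∧ b ≤ k)) := by
        apply List.countP_congr
        intro b _
        by_cases hb1 : b < t <;> by_cases hb2 : b ≤ k <;> simp [hb1, hb2]
      have e2 : B.countP (fun b => decide (t ≤ b) && decide (b ≤ k)) =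
          B.countP (fun b => decide (t ≤ b ∧ b ≤ k)) := by
        apply List.countP_congr
        intro b _
        by_cases hb1 : t ≤ b <;> by_cases hb2 : b ≤ k <;> simp [hb1, hb2]
      have e3 := countP_split B t k
      simp only [List.length_append, List.length_cons] at *
      omega
  · rw [List.countP_eq_length_filter]
    apply le_lis
    · rw [List.filter_append]
      exact List.sublist_append_right _ _
    · exact sorted_chain' (sorted_filter _ hB)

theorem sorted_le_getLast? : ∀ {l : List ℕ} {y : ℕ}, List.Pairwise (· ≤ ·) l →
    l.getLast? = some y → ∀ x ∈ l, x ≤ y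
  | [], y, _, h, x, hx => by simp at hx
  | [a], y, _, h, x, hx => by
    simp at h hx
    omega
  | a :: b :: l, y, hs, h, x, hx => by
    rw [List.getLast?_cons_cons] at h
    have hs' := List.pairwise_cons.1 hs
    rcases List.mem_cons.1 hx with rfl | hx'
    · have hy : y ∈ b :: l := mem_le_of_getLast? h
      exact hs'.1 y hy
    · exact sorted_le_getLast? hs'.2 h x hx'

theorem sorted_getD_mono {l : List ℕ} (h : List.Pairwise (· ≤ ·) l) {i j : ℕ}
    (hij : i ≤ j) (hj : j < l.length) : l.getD i 0 ≤ l.getD j 0 := by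
  rw [List.getD_eq_getElem l 0 (lt_of_le_of_lt hij hj), List.getD_eq_getElem l 0 hj]
  rcases Nat.lt_or_ge i j with h' | h'
  · exact (List.pairwise_iff_getElem.1 h) i j _ _ h'
  · have : i = j := by omega
    subst this
    rfl

theorem getD_mid : ∀ (P : List ℕ) (b : ℕ) (Q : List ℕ), (P ++ b :: Q).getD P.length 0 = b
  | [], b, Q => rfl
  | p :: P', b, Q => by simpa using getD_mid P' b Q

theorem getD_mem {l : List ℕ} {n : ℕ} (h : n < l.length) : l.getD n 0 ∈ l := by
  rw [List.getD_eq_getElem l 0 h]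
  exact List.getElem_mem h

theorem move1 : ∀ (Q : List ℕ) (b a : ℕ), a < b → List.Pairwise (· ≤ ·) Q → (∀ c ∈ Q, b ≤ c) →
    PlacticEq (b :: (Q ++ [a])) (b :: a :: Q)
  | [], b, a, _, _, _ => .refl _
  | q :: Q', b, a, hab, hs, hq => by
    have hbq : b ≤ q := hq q (by simp)
    have hs' := List.pairwise_cons.1 hs
    have ih := move1 Q' q a (lt_of_lt_of_le hab hbq) hs'.2 hs'.1
    have h1 : PlacticEq (b :: ((q :: Q') ++ [a])) (b :: q :: a :: Q') := by
      have := ih.appendL [b]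
      simpa using this
    have h2 : PlacticEq (b :: q :: a :: Q') (b :: a :: q :: Q') := by
      have step := Relation.EqvGen.rel _ _ (KnuthStep.right [] Q' a b q hab hbq)
      exact Relation.EqvGen.symm _ _ (by simpa using step)
    exact Relation.EqvGen.trans _ _ _ h1 h2

theorem move2 : ∀ (P : List ℕ) (b a : ℕ) (v : List ℕ), a < b → List.Pairwise (· ≤ ·) P →
    (∀ p ∈ P, p ≤ a) → PlacticEq (P ++ (b :: a :: v)) (b :: (P ++ (a :: v)))
  | [], b, a, v, _, _, _ => .refl _
  | p :: P', b, a, v, hab, hs, hp => by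
    have hs' := List.pairwise_cons.1 hs
    have ih := move2 P' b a v hab hs'.2 (fun x hx => hp x (by simp [hx]))
    have h1 : PlacticEq ((p :: P') ++ (b :: a :: v)) (p :: b :: (P' ++ (a :: v))) := by
      have := ih.appendL [p]
      simpa using this
    have h2 : PlacticEq (p :: b :: (P' ++ (a :: v))) (b :: p :: (P' ++ (a :: v))) := by
      cases P' with
      | nil =>
        have step := Relation.EqvGen.rel _ _ (KnuthStep.left [] v p a b (hp p (by simp)) hab)
        simpa [PlacticEq] using step
      | cons p' P'' =>
        have hpp' : p ≤ p' := hs'.1 p' (by simp)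
        have hp'a : p' ≤ a := hp p' (by simp)
        have step := Relation.EqvGen.rel _ _
          (KnuthStep.left [] (P'' ++ a :: v) p p' b hpp' (lt_of_le_of_lt hp'a hab))
        simpa [PlacticEq] using step
    exact Relation.EqvGen.trans _ _ _ h1 h2

theorem insert_one (s : ℕ) {A B : List ℕ} (hA : List.Pairwise (· ≤ ·) A)
    (hB : List.Pairwise (· ≤ ·) B) (hdom : A = [] ∨ Dominates A B)
    (hI3 : ∀ j < A.length, B.getD j 0 ≤ s)
    (hI4 : ∀ j, A.length ≤ j → j < B.length → s < B.getD j 0 →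
      ∀ x ∈ A.getLast?, x ≤ B.getD j 0) :
    ∃ A' B' : List ℕ,
      PlacticEq (A ++ B ++ [s]) (A' ++ B') ∧
      List.Pairwise (· ≤ ·) A' ∧ List.Pairwise (· ≤ ·) B' ∧
      (A' = [] ∨ Dominates A' B') ∧
      (∀ t, s ≤ t → ∀ j < A'.length, B'.getD j 0 ≤ t) ∧
      (∀ t, s ≤ t → ∀ j, A'.length ≤ j → j < B'.length → t < B'.getD j 0 →
        ∀ x ∈ A'.getLast?, x ≤ B'.getD j 0) := by
  have hlenAB : A.length ≤ B.length ∨ A = [] := by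
    rcases hdom with h | h
    · exact Or.inr h
    · exact Or.inl h.1
  obtain ⟨P, D, hP, hDdef⟩ : ∃ P D, P = B.takeWhile (fun c => decide (c ≤ s)) ∧
      D = B.dropWhile (fun c => decide (c ≤ s)) := ⟨_, _, rfl, rfl⟩
  have hPD : P ++ D = B := by rw [hP, hDdef]; apply List.takeWhile_append_dropWhile
  have hPle : ∀ c ∈ P, c ≤ s := by
    intro c hc
    rw [hP] at hc
    have := List.mem_takeWhile_imp hc
    simpa using this
  have hsplit : List.Pairwise (· ≤ ·) P ∧ List.Pairwise (· ≤ ·) D ∧ ∀ a ∈ P, ∀ b ∈ D, a ≤ b := by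
    have := hB
    rw [← hPD] at this
    rw [List.pairwise_append] at this
    exact this
  cases hD : D with
  | nil =>
    -- append case
    have hPB : P = B := by rw [← hPD, hD, List.append_nil]
    have hBle : ∀ c ∈ B, c ≤ s := by rw [← hPB]; exact hPle
    refine ⟨A, B ++ [s], ?_, hA, ?_, ?_, ?_, ?_⟩
    · rw [List.append_assoc]
      exact .refl _
    · rw [List.pairwise_append]
      exact ⟨hB, by simp, fun x hx b hb => by
        simp at hb
        subst hb
        exact hBle x hx⟩
    · rcases hdom with h | ⟨h1, h2⟩
      · exact Or.inl h
      · refine Or.inr ⟨by simp; omega, fun i hi => ?_⟩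
        rw [List.getD_append _ _ _ i (lt_of_lt_of_le hi h1)]
        exact h2 i hi
    · intro t ht j hj
      have hjB : j < B.length := by
        rcases hlenAB with h | h
        · omega
        · rw [h] at hj; simp at hj
      rw [List.getD_append _ _ _ j hjB]
      exact le_trans (hI3 j hj) ht
    · intro t ht j hjA hjB' hgt x hx
      rcases Nat.lt_or_ge j B.length with hjB | hjB
      · rw [List.getD_append _ _ _ j hjB] at hgt ⊢
        exact hI4 j hjA hjB (by omega) x hx
      · have hjeq : j = B.length := by
          simp at hjB'
          omega
        rw [List.getD_append_right _ _ _ _ hjB, hjeq] at hgt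
        simp at hgt
        omega
  | cons b Q =>
    -- bump case
    obtain ⟨hPs, hDs, hPDle⟩ := hsplit
    rw [hD] at hDs hPDle
    have hBeq : B = P ++ b :: Q := by rw [← hPD, hD]
    have hsb : s < b := by
      have h0 := List.head?_dropWhile_not (fun c => decide (c ≤ s)) B
      rw [← hDdef, hD] at h0
      simp at h0
      omega
    have hDs' := List.pairwise_cons.1 hDs
    have hQb : ∀ c ∈ Q, b ≤ c := hDs'.1
    have hQs : List.Pairwise (· ≤ ·) Q := hDs'.2
    have e_mid : B.getD P.length 0 = b := by rw [hBeq]; exact getD_mid P b Q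
    have hlenB : B.length = P.length + 1 + Q.length := by rw [hBeq]; simp; omega
    have hAp : A.length ≤ P.length := by
      by_contra hcon
      push_neg at hcon
      have := hI3 P.length hcon
      omega
    have hlastb : ∀ x ∈ A.getLast?, x ≤ b := by
      intro x hx
      have := hI4 P.length hAp (by omega) (by omega) x hx
      omega
    have hallA : ∀ x ∈ A, x ≤ b := by
      intro x hx
      have hne : A ≠ [] := List.ne_nil_of_mem hx
      have h1 : A.getLast? = some (A.getLast hne) := List.getLast?_eq_getLast hne
      exact le_trans (sorted_le_getLast? hA h1 x hx) (hlastb _ h1)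
    -- B' getD facts
    have hBD : ∀ j, j ≠ P.length → (P ++ s :: Q).getD j 0 = B.getD j 0 := by
      intro j hj
      rcases Nat.lt_or_ge j P.length with h' | h'
      · rw [List.getD_append _ _ _ j h', hBeq, List.getD_append _ _ _ j h']
      · have h'' : P.length < j := by omega
        rw [List.getD_append_right _ _ _ _ h', hBeq, List.getD_append_right _ _ _ _ h']
        have : j - P.length = (j - P.length - 1) + 1 := by omega
        rw [this]
        simp
    have hB's : (P ++ s :: Q).getD P.length 0 = s := getD_mid P s Q
    have hB'len : (P ++ s :: Q).length = B.length := by simp [hlenB]; omega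
    have hA'len : (A ++ [b]).length = A.length + 1 := by simp
    have hA'last : (A ++ [b]).getLast? = some b := List.getLast?_concat
    -- the small-index entries of B' are ≤ s
    have hsmall : ∀ j < A.length + 1, (P ++ s :: Q).getD j 0 ≤ s := by
      intro j hj
      rcases Nat.lt_or_ge j A.length with h' | h'
      · rw [hBD j (by omega)]
        exact hI3 j h'
      · rcases Nat.lt_or_ge j P.length with h'' | h''
        · rw [List.getD_append _ _ _ j h'']
          exact hPle _ (getD_mem h'')
        · have hjp : j = P.length := by omega
          rw [hjp, hB's]
    refine ⟨A ++ [b], P ++ s :: Q, ?_, ?_, ?_, ?_, ?_, ?_⟩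
    · -- plactic equivalence
      have m1 := (move1 Q b s hsb hQs hQb).appendL (A ++ P)
      have m2 := (move2 P b s Q hsb hPs hPle).appendL A
      have e1 : A ++ B ++ [s] = (A ++ P) ++ (b :: (Q ++ [s])) := by
        rw [hBeq]; simp
      have e2 : (A ++ P) ++ (b :: s :: Q) = A ++ (P ++ (b :: s :: Q)) := by simp
      have e3 : A ++ [b] ++ (P ++ s :: Q) = A ++ (b :: (P ++ (s :: Q))) := by simp
      rw [e1, e3]
      refine Relation.EqvGen.trans _ _ _ m1 ?_
      rw [e2]
      exact m2
    · rw [List.pairwise_append]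
      refine ⟨hA, by simp, fun x hx b' hb' => ?_⟩
      simp at hb'
      subst hb'
      exact hallA x hx
    · rw [List.pairwise_append]
      refine ⟨hPs, ?_, ?_⟩
      · rw [List.pairwise_cons]
        exact ⟨fun c hc => le_trans hsb.le (hQb c hc), hQs⟩
      · intro x hx c hc
        have hxs := hPle x hx
        rcases List.mem_cons.1 hc with rfl | hc'
        · exact hxs
        · exact le_trans hxs (le_trans hsb.le (hQb c hc'))
    · refine Or.inr ⟨?_, ?_⟩
      · rw [hA'len, hB'len, hlenB]; omega
      · intro i hi
        rw [hA'len] at hi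
        rcases Nat.lt_or_ge i A.length with h' | h'
        · rw [List.getD_append _ _ _ i h']
          have hdom' : Dominates A B := by
            rcases hdom with h | h
            · rw [h] at h'; simp at h'
            · exact h
          rw [hBD i (by omega)]
          exact hdom'.2 i h'
        · have hie : i = A.length := by omega
          have hb1 : (A ++ [b]).getD i 0 = b := by rw [hie]; exact getD_mid A b []
          rw [hb1]
          have := hsmall i (by omega)
          omega
    · intro t ht j hj
      rw [hA'len] at hj
      exact le_trans (hsmall j hj) ht
    · intro t ht j hjA hjB hgt x hx
      rw [hA'last] at hx
      simp at hx
      subst hx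
      rw [hA'len] at hjA
      rcases Nat.lt_or_ge j P.length with h' | h'
      · rw [List.getD_append _ _ _ j h'] at hgt
        have := hPle _ (getD_mem h')
        omega
      · rcases Nat.eq_or_lt_of_le h' with h'' | h''
        · rw [← h''] at hgt
          rw [hB's] at hgt
          omega
        · rw [hBD j (by omega)] at hgt ⊢
          rw [← e_mid]
          apply sorted_getD_mono hB (by omega)
          rw [hB'len] at hjB
          exact hjB

theorem insert_all : ∀ (T A B : List ℕ), List.Pairwise (· ≤ ·) T → List.Pairwise (· ≤ ·) A →
    List.Pairwise (· ≤ ·) B → (A = [] ∨ Dominates A B) →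
    (∀ t ∈ T, ∀ j < A.length, B.getD j 0 ≤ t) →
    (∀ t ∈ T, ∀ j, A.length ≤ j → j < B.length → t < B.getD j 0 →
      ∀ x ∈ A.getLast?, x ≤ B.getD j 0) →
    ∃ A' B', PlacticEq (A ++ B ++ T) (A' ++ B') ∧ List.Pairwise (· ≤ ·) A' ∧
      List.Pairwise (· ≤ ·) B' ∧ (A' = [] ∨ Dominates A' B')
  | [], A, B, _, hA, hB, hdom, _, _ =>
    ⟨A, B, by simpa [PlacticEq] using Relation.EqvGen.refl (A ++ B), hA, hB, hdom⟩
  | s :: T', A, B, hT, hA, hB, hdom, h3, h4 => by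
    have hT' := List.pairwise_cons.1 hT
    obtain ⟨A1, B1, hpl, hA1, hB1, hdom1, h3', h4'⟩ :=
      insert_one s hA hB hdom (h3 s (by simp)) (h4 s (by simp))
    obtain ⟨A', B', hpl2, hA', hB', hdom'⟩ :=
      insert_all T' A1 B1 hT'.2 hA1 hB1 hdom1
        (fun t ht => h3' t (hT'.1 t ht))
        (fun t ht => h4' t (hT'.1 t ht))
    refine ⟨A', B', ?_, hA', hB', hdom'⟩
    have e : A ++ B ++ (s :: T') = (A ++ B ++ [s]) ++ T' := by simp
    rw [e]
    exact Relation.EqvGen.trans _ _ _ (hpl.appendR T') hpl2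

theorem tableau_counts {R S A B : List ℕ} (hR : IsRow R) (hS : IsRow S)
    (hR1 : ∀ a ∈ R, 1 ≤ a) (hS1 : ∀ a ∈ S, 1 ≤ a)
    (hA : IsRow A) (hB : IsRow B)
    (hdom : A = [] ∨ Dominates A B) (heq : PlacticEq (R ++ S) (A ++ B)) :
    ∀ i, 1 ≤ i →
      A.count i = xcomp (fun j => R.count j) (fun j => S.count j) i ∧
      B.count i = ycomp (fun j => R.count j) (fun j => S.count j) i := by
  set W : ℕ → ℕ := fun j => R.count j with hW
  set Z : ℕ → ℕ := fun j => S.count j with hZ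
  clear_value W Z
  have keyB' : ∀ k, B.countP (fun b => decide (b ≤ k)) = PS W k + PS Z k - capX W Z k := by
    intro k
    rw [← lis_tableau k hA hB hdom, ← placticEq_lis_filter k heq,
      lis_two_rows k hR hS hR1 hS1, ← hW, ← hZ]
  have keyA' : ∀ k, A.countP (fun b => decide (b ≤ k)) = capX W Z k := by
    intro k
    have htot := placticEq_countP (fun b => decide (b ≤ k)) heq
    rw [List.countP_append, List.countP_append] at htot
    have e1 : R.countP (fun b => decide (b ≤ k)) = PS W k := by
      rw [hW]; exact (PS_count R hR1 k).symm
    have e2 : S.countP (fun b => decide (b ≤ k)) = PS Z k := by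
      rw [hZ]; exact (PS_count S hS1 k).symm
    have e3 := keyB' k
    have e4 := capX_le_W W Z k
    have e5 := capX_le_Z W Z k
    have e6 : PS Z (k - 1) ≤ PS Z k := PS_mono Z (by omega)
    omega
  intro i hi
  have c1 := countP_succ A (i - 1)
  have c2 := countP_succ B (i - 1)
  rw [show i - 1 + 1 = i by omega] at c1 c2
  have k1 := keyA' i
  have k2 := keyA' (i - 1)
  have k3 := keyB' i
  have k4 := keyB' (i - 1)
  have m1 : capX W Z (i - 1) ≤ capX W Z i := capX_mono W Z (by omega)
  have m2 : capX W Z i ≤ capX W Z (i - 1) + W i := by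
    have := capX_succ_le W Z (i - 1)
    rw [show i - 1 + 1 = i by omega] at this
    exact this
  have p1 : PS W i = PS W (i - 1) + W i := by
    have := PS_succ W (i - 1)
    rw [show i - 1 + 1 = i by omega] at this
    exact this
  have p2 : PS Z i = PS Z (i - 1) + Z i := by
    have := PS_succ Z (i - 1)
    rw [show i - 1 + 1 = i by omega] at this
    exact this
  have e4 := capX_le_W W Z i
  have e4' := capX_le_W W Z (i - 1)
  have e5 := capX_le_Z W Z i
  have e6 : PS Z (i - 1 - 1) ≤ PS Z (i - 1) := PS_mono Z (by omega)
  have e5' := capX_le_Z W Z (i - 1)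
  constructor
  · show A.count i = capX W Z i - capX W Z (i - 1)
    omega
  · show B.count i = W i + Z i - (capX W Z i - capX W Z (i - 1))
    omega

/-- For any two rows `R, S` on `{1, …, n}` there are unique rows `R', S'`
(with `R'` possibly empty) such that `R·S ≡ R'·S'` in the plactic monoid and
`R'·S'` is a Young tableau; moreover `R', S'` are given by the vector
insertion algorithm applied to the multiplicity vectors of `(R, S)`. -/
theorem unique_tableau_of_two_rows (n : ℕ) (R S : List ℕ)
    (hR : IsRow R) (hS : IsRow S)
    (hRm : ∀ a ∈ R, 1 ≤ a ∧ a ≤ n) (hSm : ∀ a ∈ S, 1 ≤ a ∧ a ≤ n) :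
    (∃! p : List ℕ × List ℕ,
      IsRow p.1 ∧ IsRow p.2 ∧
      (∀ a ∈ p.1, 1 ≤ a ∧ a ≤ n) ∧ (∀ a ∈ p.2, 1 ≤ a ∧ a ≤ n) ∧
      (p.1 = [] ∨ Dominates p.1 p.2) ∧
      PlacticEq (R ++ S) (p.1 ++ p.2)) ∧
    (∀ p : List ℕ × List ℕ,
      (IsRow p.1 ∧ IsRow p.2 ∧
        (∀ a ∈ p.1, 1 ≤ a ∧ a ≤ n) ∧ (∀ a ∈ p.2, 1 ≤ a ∧ a ≤ n) ∧
        (p.1 = [] ∨ Dominates p.1 p.2) ∧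
        PlacticEq (R ++ S) (p.1 ++ p.2)) →
      ∀ i, 1 ≤ i → i ≤ n →
        p.1.count i = xcomp (fun j => R.count j) (fun j => S.count j) i ∧
        p.2.count i = ycomp (fun j => R.count j) (fun j => S.count j) i) := by
  obtain ⟨A, B, hpl0, hA, hB, hdom⟩ :=
    insert_all S [] R hS List.Pairwise.nil hR (Or.inl rfl)
      (fun t _ j hj => by simp at hj)
      (fun t _ j _ _ _ x hx => by simp at hx)
  have hpl : PlacticEq (R ++ S) (A ++ B) := by simpa using hpl0
  have hperm := placticEq_perm hpl
  have hmemAB : ∀ a ∈ A ++ B, 1 ≤ a ∧ a ≤ n := by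
    intro a ha
    have hmem : a ∈ R ++ S := hperm.mem_iff.2 ha
    rcases List.mem_append.1 hmem with h | h
    · exact hRm a h
    · exact hSm a h
  have hAm : ∀ a ∈ A, 1 ≤ a ∧ a ≤ n := fun a ha => hmemAB a (List.mem_append.2 (Or.inl ha))
  have hBm : ∀ a ∈ B, 1 ≤ a ∧ a ≤ n := fun a ha => hmemAB a (List.mem_append.2 (Or.inr ha))
  have hR1 : ∀ a ∈ R, 1 ≤ a := fun a ha => (hRm a ha).1
  have hS1 : ∀ a ∈ S, 1 ≤ a := fun a ha => (hSm a ha).1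
  have main : ∀ p : List ℕ × List ℕ,
      (IsRow p.1 ∧ IsRow p.2 ∧ (∀ a ∈ p.1, 1 ≤ a ∧ a ≤ n) ∧ (∀ a ∈ p.2, 1 ≤ a ∧ a ≤ n) ∧
        (p.1 = [] ∨ Dominates p.1 p.2) ∧ PlacticEq (R ++ S) (p.1 ++ p.2)) →
      ∀ i, 1 ≤ i →
        p.1.count i = xcomp (fun j => R.count j) (fun j => S.count j) i ∧
        p.2.count i = ycomp (fun j => R.count j) (fun j => S.count j) i := by
    rintro p ⟨h1, h2, h3, h4, h5, h6⟩ i hi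
    exact tableau_counts hR hS hR1 hS1 h1 h2 h5 h6 i hi
  have hprops : IsRow (A, B).1 ∧ IsRow (A, B).2 ∧
      (∀ a ∈ (A, B).1, 1 ≤ a ∧ a ≤ n) ∧ (∀ a ∈ (A, B).2, 1 ≤ a ∧ a ≤ n) ∧
      ((A, B).1 = [] ∨ Dominates (A, B).1 (A, B).2) ∧
      PlacticEq (R ++ S) ((A, B).1 ++ (A, B).2) :=
    ⟨hA, hB, hAm, hBm, hdom, hpl⟩
  constructor
  · refine ⟨(A, B), hprops, ?_⟩
    rintro q hq
    have hq3 := hq.2.2.1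
    have hq4 := hq.2.2.2.1
    have hcnt1 : ∀ i, q.1.count i = A.count i := by
      intro i
      rcases Nat.eq_zero_or_pos i with rfl | hi
      · have z1 : (0 : ℕ) ∉ q.1 := fun hmem => by have := (hq3 0 hmem).1; omega
        have z2 : (0 : ℕ) ∉ A := fun hmem => by have := (hAm 0 hmem).1; omega
        simp [List.count_eq_zero.2 z1, List.count_eq_zero.2 z2]
      · have e1 := (main q hq i hi).1
        have e2 := (main (A, B) hprops i hi).1
        rw [e1, e2]
    have hcnt2 : ∀ i, q.2.count i = B.count i := by
      intro i
      rcases Nat.eq_zero_or_pos i with rfl | hi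
      · have z1 : (0 : ℕ) ∉ q.2 := fun hmem => by have := (hq4 0 hmem).1; omega
        have z2 : (0 : ℕ) ∉ B := fun hmem => by have := (hBm 0 hmem).1; omega
        simp [List.count_eq_zero.2 z1, List.count_eq_zero.2 z2]
      · have e1 := (main q hq i hi).2
        have e2 := (main (A, B) hprops i hi).2
        rw [e1, e2]
    have hq1eq : q.1 = A :=
      List.Perm.eq_of_pairwise' hq.1 hA (List.perm_iff_count.2 hcnt1)
    have hq2eq : q.2 = B :=
      List.Perm.eq_of_pairwise' hq.2.1 hB (List.perm_iff_count.2 hcnt2)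
    exact Prod.ext hq1eq hq2eq
  · intro p hp i hi1 _
    exact main p hp i hi1
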